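/- Let W : ℝ → ℝ be continuous and 2π-periodic such that for every nonzero integer n, the Fourier coefficient c_n(W) := (1/2π)·∫₀^{2π} W(θ)·e^{−i·n·θ} dθ is nonzero. Let μ be a Borel probability measure on the circle ℝ/2πℤ such that the function θ ↦ ∫ W(θ − ω) dμ(ω) is constant. Then μ is the normalized uniform (Haar) probability measure on the circle. -/

import Mathlib

open Real Filter MeasureTheory AddCircle

instance : Fact ((0 : ℝ) < 2 * π) := ⟨by positivity⟩

section Aux

local notation "T" => (2 * π : ℝ)

lemma integrable_cont {X : Type*} [MeasurableSpace X] [TopologicalSpace X] [CompactSpace X]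
    [OpensMeasurableSpace X] [T2Space X] {E : Type*} [NormedAddCommGroup E]
    (ν : Measure X) [IsFiniteMeasure ν] {f : X → E} (hf : Continuous f) :
    Integrable f ν :=
  hf.integrable_of_hasCompactSupport (HasCompactSupport.of_compactSpace f)

lemma haar_fourier_zero {n : ℤ} (hn : n ≠ 0) :
    (∫ θ : AddCircle T, fourier n θ ∂haarAddCircle) = 0 := by
  have h1 : (∫ θ : AddCircle T, fourier n (θ + ((T / 2 / n : ℝ) : AddCircle T))
      ∂haarAddCircle) = ∫ θ : AddCircle T, fourier n θ ∂haarAddCircle :=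
    integral_add_right_eq_self _ _
  have h2 : ∀ θ : AddCircle T, fourier n (θ + ((T / 2 / n : ℝ) : AddCircle T)) = -fourier n θ :=
    fun θ => fourier_add_half_inv_index hn (by positivity) θ
  simp_rw [h2, integral_neg] at h1
  linear_combination (-1/2 : ℂ) * h1

/-- Integration against a finite measure, as a continuous linear functional on continuous
functions on the circle. -/
noncomputable def intCLM (ν : Measure (AddCircle T)) [IsFiniteMeasure ν] :
    C(AddCircle T, ℂ) →L[ℂ] ℂ :=
  LinearMap.mkContinuous
    { toFun := fun f => ∫ x, f x ∂ν
      map_add' := fun f g => by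
        simp only [ContinuousMap.add_apply]
        exact integral_add (integrable_cont ν f.continuous) (integrable_cont ν g.continuous)
      map_smul' := fun c f => by
        simp only [ContinuousMap.smul_apply, smul_eq_mul, RingHom.id_apply]
        exact integral_const_mul c _ }
    ((ν Set.univ).toReal)
    (fun f => by
      refine le_trans (norm_integral_le_of_norm_le_const
        (Eventually.of_forall fun x => f.norm_coe_le_norm x)) ?_
      rw [mul_comm]
      exact le_rfl)

@[simp] lemma intCLM_apply (ν : Measure (AddCircle T)) [IsFiniteMeasure ν]
    (f : C(AddCircle T, ℂ)) : intCLM ν f = ∫ x, f x ∂ν := rfl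

end Aux

/-- If the interaction potential `W` has all nonzero Fourier coefficients nonzero and the
velocity potential `W ∗ μ` is constant on the circle, then `μ` is the uniform (Haar)
probability measure. -/
theorem constant_potential_implies_uniform
    (W : AddCircle (2 * π) → ℝ) (hW : Continuous W)
    (hc : ∀ n : ℤ, n ≠ 0 →
      (∫ θ : AddCircle (2 * π), (W θ : ℂ) * fourier (-n) θ ∂haarAddCircle) ≠ 0)
    (μ : Measure (AddCircle (2 * π))) [IsProbabilityMeasure μ]
    (hconst : ∃ K : ℝ, ∀ θ : AddCircle (2 * π), (∫ ω, W (θ - ω) ∂μ) = K) :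
    μ = haarAddCircle := by
  obtain ⟨K, hK⟩ := hconst
  -- Moments of μ at nonzero frequencies vanish
  have hmom : ∀ n : ℤ, n ≠ 0 → (∫ ω, fourier n ω ∂μ) = 0 := by
    intro n hn
    have hcn : (∫ θ : AddCircle (2 * π), (W θ : ℂ) * fourier n θ ∂haarAddCircle) ≠ 0 := by
      simpa using hc (-n) (neg_ne_zero.mpr hn)
    have hint : Integrable (Function.uncurry fun θ ω : AddCircle (2 * π) =>
        ((W (θ - ω) : ℂ) * fourier n θ)) (haarAddCircle.prod μ) := by
      apply integrable_cont
      exact (Complex.continuous_ofReal.comp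
        (hW.comp (continuous_fst.sub continuous_snd))).mul
        ((fourier n).continuous.comp continuous_fst)
    have hmul : ∀ x y : AddCircle (2 * π), fourier n (x + y) = fourier n x * fourier n y := by
      intro x y
      simp only [fourier_apply, smul_add, toCircle_add]
      push_cast
      ring
    have way1 : (∫ θ : AddCircle (2 * π),
        ∫ ω, (W (θ - ω) : ℂ) * fourier n θ ∂μ ∂haarAddCircle) = 0 := by
      have inner : ∀ θ : AddCircle (2 * π),
          (∫ ω, (W (θ - ω) : ℂ) * fourier n θ ∂μ) = (K : ℂ) * fourier n θ := by
        intro θ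
        rw [integral_mul_const]
        exact congrArg (· * fourier n θ)
          (integral_ofReal.trans (congrArg Complex.ofReal (hK θ)))
      simp_rw [inner]
      rw [integral_const_mul, haar_fourier_zero hn, mul_zero]
    have way2 : (∫ θ : AddCircle (2 * π),
        ∫ ω, (W (θ - ω) : ℂ) * fourier n θ ∂μ ∂haarAddCircle)
        = (∫ θ : AddCircle (2 * π), (W θ : ℂ) * fourier n θ ∂haarAddCircle)
          * (∫ ω, fourier n ω ∂μ) := by
      rw [integral_integral_swap hint]
      have inner2 : ∀ ω : AddCircle (2 * π),
          (∫ θ : AddCircle (2 * π), (W (θ - ω) : ℂ) * fourier n θ ∂haarAddCircle)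
          = (∫ θ : AddCircle (2 * π), (W θ : ℂ) * fourier n θ ∂haarAddCircle)
            * fourier n ω := by
        intro ω
        have := integral_add_right_eq_self
          (μ := haarAddCircle) (fun θ : AddCircle (2 * π) => (W (θ - ω) : ℂ) * fourier n θ) ω
        rw [← this]
        simp_rw [add_sub_cancel_right, hmul, ← mul_assoc]
        rw [integral_mul_const]
      simp_rw [inner2]
      rw [integral_const_mul]
    rw [way1] at way2
    exact (mul_eq_zero.mp way2.symm).resolve_left hcn
  -- integrals of all continuous complex functions agree
  have hCC : ∀ f : C(AddCircle (2 * π), ℂ),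
      (∫ x, f x ∂μ) = ∫ x, f x ∂haarAddCircle := by
    set L : C(AddCircle (2 * π), ℂ) →L[ℂ] ℂ := intCLM μ - intCLM haarAddCircle with hL
    have hker : Submodule.span ℂ (Set.range (@fourier (2 * π))) ≤ L.ker := by
      rw [Submodule.span_le]
      rintro _ ⟨n, rfl⟩
      simp only [SetLike.mem_coe, LinearMap.mem_ker, ContinuousLinearMap.coe_coe, hL,
        ContinuousLinearMap.coe_sub', Pi.sub_apply, intCLM_apply]
      rcases eq_or_ne n 0 with rfl | hn
      · simp [fourier_zero]
      · rw [hmom n hn, haar_fourier_zero hn, sub_zero]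
    have hker' : (⊤ : Submodule ℂ C(AddCircle (2 * π), ℂ)) ≤ L.ker := by
      rw [← span_fourier_closure_eq_top]
      exact (Submodule.span ℂ (Set.range (@fourier (2 * π)))).topologicalClosure_minimal
        hker (ContinuousLinearMap.isClosed_ker L)
    intro f
    have hLf : L f = 0 := hker' Submodule.mem_top
    rw [hL, ContinuousLinearMap.sub_apply, intCLM_apply, intCLM_apply, sub_eq_zero] at hLf
    exact hLf
  -- conclude via bounded continuous ℝ≥0 test functions
  apply ext_of_forall_lintegral_eq_of_IsFiniteMeasure
  intro f
  have hfc : Continuous fun x => ((f x : ℝ) : ℂ) :=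
    Complex.continuous_ofReal.comp (NNReal.continuous_coe.comp f.continuous)
  have key := hCC ⟨fun x => ((f x : ℝ) : ℂ), hfc⟩
  simp only [ContinuousMap.coe_mk] at key
  have keyR : (∫ x, (f x : ℝ) ∂μ) = ∫ x, (f x : ℝ) ∂haarAddCircle :=
    Complex.ofReal_injective
      ((integral_ofReal (μ := μ)).symm.trans (key.trans integral_ofReal))
  rw [lintegral_coe_eq_integral _ (integrable_cont μ
      (NNReal.continuous_coe.comp f.continuous)),
    lintegral_coe_eq_integral _ (integrable_cont haarAddCircle
      (NNReal.continuous_coe.comp f.continuous)), keyR]
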